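/- Let p be an odd prime and let r be an integer with 0 < r < p. Then in the polynomial ring F_p(α)[X] one has L_{p−1}^{(rα)}(rX) · L_{p−1}^{(−rα)}(−rX) ≡ 1 − α^{p−1} modulo the ideal generated by X^p − (α^p − α), where L_{p−1}^{(rα)}(rX) denotes the polynomial obtained from L_{p−1}^{(α)}(X) by substituting rα for the parameter and rX for the variable. -/

import Mathlib

noncomputable def binomF {K : Type*} [Field K] (f : K) (m : ℕ) : K :=
  Polynomial.eval f (descPochhammer K m) / (m.factorial : K)

noncomputable def Lag (p : ℕ) {K : Type*} [Field K] (a : K) : Polynomial K :=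
  ∑ k ∈ Finset.range p,
    Polynomial.C (binomF (a - 1) (p - 1 - k) * (-1 : K) ^ k / (k.factorial : K)) *
      Polynomial.X ^ k

section aux

variable {p : ℕ} [hp : Fact p.Prime] {K : Type*} [Field K] [CharP K p]

lemma ppos : 0 < p := hp.out.pos

lemma fact_ne_zero {k : ℕ} (hk : k < p) : (k.factorial : K) ≠ 0 := by
  rw [Ne, CharP.cast_eq_zero_iff K p]
  intro h
  exact absurd (Nat.Prime.dvd_factorial hp.out |>.mp h) (by omega)

lemma cast_eq_castHom (n : ℕ) : ((n : ℕ) : K) = ZMod.castHom (dvd_refl p) K (n : ZMod p) := by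
  simp

lemma fact_pred_cast : (((p-1).factorial : ℕ) : K) = -1 := by
  rw [cast_eq_castHom (p := p)]
  rw [ZMod.wilsons_lemma, map_neg, map_one]

lemma binomF_zero (f : K) : binomF f 0 = 1 := by
  simp [binomF]

lemma binomF_succ (f : K) (m : ℕ) :
    binomF f (m+1) = binomF f m * (f - m) / (m+1) := by
  unfold binomF
  rw [descPochhammer_succ_eval, Nat.factorial_succ, Nat.cast_mul, Nat.cast_succ]
  rw [div_mul_eq_mul_div, div_div, mul_comm ((m.factorial : K))]

end aux

open Polynomial Finset

section prodid

variable {p : ℕ} [hp : Fact p.Prime]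

lemma prod_univ_ZMod :
    ∏ x : ZMod p, (X - C x) = X ^ p - X := by
  have h1 : (X ^ p - X : (ZMod p)[X]).Monic := by
    apply monic_X_pow_sub
    simpa using hp.out.one_lt
  have hq : Fintype.card (ZMod p) = p := ZMod.card p
  have hroots : (X ^ p - X : (ZMod p)[X]).roots = Finset.univ.val := by
    have := FiniteField.roots_X_pow_card_sub_X (ZMod p)
    rwa [hq] at this
  have hdeg : (X ^ p - X : (ZMod p)[X]).natDegree = p :=
    FiniteField.X_pow_card_sub_X_natDegree_eq _ hp.out.one_lt
  have h2 : Multiset.card (X ^ p - X : (ZMod p)[X]).roots = (X ^ p - X : (ZMod p)[X]).natDegree := by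
    rw [hroots, hdeg]
    exact (Finset.card_univ).trans (ZMod.card p)
  have h3 := prod_multiset_X_sub_C_of_monic_of_roots_card_eq h1 h2
  rw [hroots] at h3
  rw [← h3, Finset.prod_eq_multiset_prod]

lemma prod_Ico_ZMod :
    ∏ i ∈ Ico 1 p, (X + C ((i : ZMod p))) = X ^ (p - 1) - 1 := by
  have h0 : (X ^ p - X : (ZMod p)[X])
      = (X - C (0 : ZMod p)) * ∏ x ∈ univ.erase (0 : ZMod p), (X - C x) := by
    rw [← prod_univ_ZMod]
    exact (Finset.mul_prod_erase univ (fun x => X - C x) (mem_univ 0)).symm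
  have hbij : ∏ x ∈ univ.erase (0 : ZMod p), (X - C x)
      = ∏ i ∈ Ico 1 p, (X + C ((i : ZMod p))) := by
    refine Finset.prod_nbij' (fun x => (-x).val) (fun n => -((n : ℕ) : ZMod p)) ?_ ?_ ?_ ?_ ?_
    · intro x hx
      rw [mem_erase] at hx
      rw [mem_Ico]
      refine ⟨?_, ZMod.val_lt _⟩
      have hnx : (-x) ≠ 0 := by simpa using hx.1
      have hv : (-x).val ≠ 0 := fun h => hnx (by rwa [← ZMod.val_eq_zero])
      exact Nat.one_le_iff_ne_zero.mpr hv
    · intro n hn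
      rw [mem_Ico] at hn
      rw [mem_erase]
      refine ⟨?_, mem_univ _⟩
      intro h
      rw [neg_eq_zero, ZMod.natCast_eq_zero_iff] at h
      have := Nat.le_of_dvd (by omega) h
      omega
    · intro x _
      show -(((-x).val : ℕ) : ZMod p) = x
      rw [ZMod.natCast_val, ZMod.cast_id, neg_neg]
    · intro n hn
      rw [mem_Ico] at hn
      show (-(-((n : ℕ) : ZMod p))).val = n
      rw [neg_neg, ZMod.val_cast_of_lt hn.2]
    · intro x _
      show (X : (ZMod p)[X]) - C x = X + C ((((-x).val : ℕ) : ZMod p))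
      rw [ZMod.natCast_val, ZMod.cast_id, map_neg, ← sub_eq_add_neg]
  rw [hbij] at h0
  have hXfac : (X ^ p - X : (ZMod p)[X]) = X * (X ^ (p - 1) - 1) := by
    have hpp : p - 1 + 1 = p := by have := hp.out.pos; omega
    rw [mul_sub, mul_one, ← pow_succ', hpp]
  rw [hXfac, C_0, sub_zero] at h0
  exact (mul_left_cancel₀ X_ne_zero h0.symm)

variable {K : Type*} [Field K] [CharP K p]

lemma prod_Ico_K :
    ∏ i ∈ Ico 1 p, ((X : K[X]) + C ((i : K))) = X ^ (p - 1) - 1 := by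
  have := congrArg (Polynomial.map (ZMod.castHom (dvd_refl p) K)) (prod_Ico_ZMod (p := p))
  rw [Polynomial.map_prod] at this
  simpa using this

lemma prod_add_Ico (a : K) : ∏ i ∈ Ico 1 p, (a + (i : K)) = a ^ (p - 1) - 1 := by
  have := congrArg (Polynomial.eval a) (prod_Ico_K (p := p) (K := K))
  simpa [eval_prod] using this

lemma cast_pred_eq_neg_one : ((p - 1 : ℕ) : K) = -1 := by
  have h4 : ((p - 1 : ℕ) : K) + ((1 : ℕ) : K) = ((p : ℕ) : K) := by
    rw [← Nat.cast_add]
    congr 1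
    have := hp.out.pos
    omega
  rw [CharP.cast_eq_zero K p, Nat.cast_one] at h4
  exact eq_neg_of_add_eq_zero_left h4

lemma derivative_finset_prod_linear :
    derivative (∏ i ∈ Ico 1 p, ((X : K[X]) + C ((i : K))))
      = ∑ k ∈ Ico 1 p, ∏ i ∈ (Ico 1 p).erase k, ((X : K[X]) + C ((i : K))) := by
  have h1 : derivative (∏ i ∈ Ico 1 p, ((X : K[X]) + C ((i : K))))
      = ∑ k ∈ Ico 1 p, (∏ i ∈ (Ico 1 p).erase k, ((X : K[X]) + C ((i : K))))
          * derivative ((X : K[X]) + C ((k : K))) := by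
    rw [Finset.prod_eq_multiset_prod, derivative_prod, Finset.sum_eq_multiset_sum]
    rfl
  rw [h1]
  apply Finset.sum_congr rfl
  intro k _
  simp

lemma dsum_Ico (a : K) :
    ∑ k ∈ Ico 1 p, ∏ i ∈ (Ico 1 p).erase k, (a + (i : K)) = -a ^ (p - 2) := by
  have hD := derivative_finset_prod_linear (p := p) (K := K)
  rw [prod_Ico_K] at hD
  have h2 : derivative ((X : K[X]) ^ (p - 1) - 1) = C (-1) * X ^ (p - 2) := by
    rw [derivative_sub, derivative_one, derivative_X_pow, sub_zero, cast_pred_eq_neg_one,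
      show p - 1 - 1 = p - 2 from by omega]
  rw [h2] at hD
  have := congrArg (Polynomial.eval a) hD.symm
  simpa [eval_prod, eval_finset_sum] using this

end prodid
section bbsec

open Polynomial Finset

variable {p : ℕ} [hp : Fact p.Prime] {K : Type*} [Field K] [CharP K p]

noncomputable def bb (p : ℕ) {K : Type*} [Field K] (a : K) (k : ℕ) : K :=
  binomF (a - 1) (p - 1 - k) * (-1 : K) ^ k / (k.factorial : K)

lemma Lag_eq (a : K) : Lag p a = ∑ k ∈ Finset.range p, C (bb p a k) * X ^ k := rfl

lemma coeff_Lag (a : K) (n : ℕ) :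
    (Lag p a).coeff n = if n < p then bb p a n else 0 := by
  rw [Lag_eq, finset_sum_coeff]
  simp only [coeff_C_mul, coeff_X_pow, mul_ite, mul_one, mul_zero]
  rw [Finset.sum_ite_eq (Finset.range p) n (fun k => bb p a k)]
  simp [Finset.mem_range]

lemma natDegree_Lag_le (a : K) : (Lag p a).natDegree ≤ p - 1 := by
  apply Polynomial.natDegree_le_iff_coeff_eq_zero.mpr
  intro n hn
  rw [coeff_Lag, if_neg]
  have := ppos (p := p)
  omega

lemma cast_succ_ne_zero {k : ℕ} (h : k + 1 < p) : ((k + 1 : ℕ) : K) ≠ 0 := by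
  rw [Ne, CharP.cast_eq_zero_iff K p]
  intro hd
  have := Nat.le_of_dvd (by omega) hd
  omega

lemma bb_rec (a : K) (k : ℕ) (h : k + 2 ≤ p) :
    bb p a k = (a + ((k + 1 : ℕ) : K)) * bb p a (k + 1) := by
  have hm : p - 1 - k = (p - 2 - k) + 1 := by omega
  have hm2 : p - 1 - (k + 1) = p - 2 - k := by omega
  have hcast : ((p - 2 - k : ℕ) : K) = -(((k + 2 : ℕ) : K)) := by
    have hh : ((p - 2 - k : ℕ) : K) + ((k + 2 : ℕ) : K) = ((p : ℕ) : K) := by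
      rw [← Nat.cast_add]; congr 1; omega
    rw [CharP.cast_eq_zero K p] at hh
    exact eq_neg_of_add_eq_zero_left hh
  have e1 : (a - 1) - ((p - 2 - k : ℕ) : K) = a + ((k + 1 : ℕ) : K) := by
    rw [hcast]; push_cast; ring
  have e2 : ((p - 2 - k : ℕ) : K) + 1 = -(((k + 1 : ℕ) : K)) := by
    rw [hcast]; push_cast; ring
  unfold bb
  rw [hm, hm2, binomF_succ, e1, e2, Nat.factorial_succ, Nat.cast_mul, pow_succ]
  simp only [div_eq_mul_inv, mul_inv, inv_neg]
  ring

lemma bb_last (hodd : Odd p) (a : K) : bb p a (p - 1) = -1 := by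
  unfold bb
  rw [Nat.sub_self, binomF_zero, fact_pred_cast]
  have : (-1 : K) ^ (p - 1) = 1 := Even.neg_one_pow (Nat.Odd.sub_odd hodd odd_one)
  rw [this]
  norm_num

lemma bb_prod (hodd : Odd p) (a : K) :
    ∀ m k, k + m + 1 = p → bb p a k = -∏ i ∈ Ico (k + 1) p, (a + (i : K)) := by
  intro m
  induction m with
  | zero =>
    intro k hk
    have hk' : k = p - 1 := by omega
    subst hk'
    rw [show p - 1 + 1 = p from by have := ppos (p := p); omega, Finset.Ico_self]
    simpa using bb_last hodd a
  | succ m ih =>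
    intro k hk
    rw [bb_rec a k (by omega), ih (k + 1) (by omega),
      Finset.prod_eq_prod_Ico_succ_bot (show k + 1 < p from by omega)]
    ring

lemma bb_zero (hodd : Odd p) (a : K) : bb p a 0 = 1 - a ^ (p - 1) := by
  rw [bb_prod hodd a (p - 1) 0 (by have := ppos (p := p); omega), zero_add, prod_add_Ico]
  ring

noncomputable def bb' (p : ℕ) {K : Type*} [Field K] (a : K) (k : ℕ) : K :=
  bb p (-a) k * (-1 : K) ^ k

lemma bb'_rec (a : K) (k : ℕ) (h : k + 2 ≤ p) :
    bb' p a k = (a - ((k + 1 : ℕ) : K)) * bb' p a (k + 1) := by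
  unfold bb'
  rw [bb_rec (-a) k h, pow_succ]
  ring

lemma bb'_last (hodd : Odd p) (a : K) : bb' p a (p - 1) = -1 := by
  unfold bb'
  rw [bb_last hodd, Even.neg_one_pow (Nat.Odd.sub_odd hodd odd_one)]
  ring

lemma bb'_zero (hodd : Odd p) (a : K) : bb' p a 0 = 1 - a ^ (p - 1) := by
  unfold bb'
  rw [bb_zero hodd, Even.neg_pow (Nat.Odd.sub_odd hodd odd_one)]
  ring

lemma bb'_prod (hodd : Odd p) (a : K) :
    ∀ m k, k + m + 1 = p → bb' p a k = -∏ i ∈ Ico (k + 1) p, (a - (i : K)) := by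
  intro m
  induction m with
  | zero =>
    intro k hk
    have hk' : k = p - 1 := by omega
    subst hk'
    rw [show p - 1 + 1 = p from by have := ppos (p := p); omega, Finset.Ico_self]
    simpa using bb'_last hodd a
  | succ m ih =>
    intro k hk
    rw [bb'_rec a k (by omega), ih (k + 1) (by omega),
      Finset.prod_eq_prod_Ico_succ_bot (show k + 1 < p from by omega)]
    ring

noncomputable def GG (p : ℕ) {K : Type*} [Field K] (a : K) : K[X] :=
  ∑ k ∈ Finset.range p, C (bb' p a k) * X ^ k

lemma GG_eq (a : K) : (Lag p (-a)).comp (-X) = GG p a := by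
  rw [Lag_eq, GG, Polynomial.sum_comp]
  apply Finset.sum_congr rfl
  intro k _
  rw [mul_comp, C_comp, pow_comp, X_comp, neg_pow, bb']
  rw [map_mul]
  have : (C ((-1 : K) ^ k) : K[X]) = (-1 : K[X]) ^ k := by
    rw [map_pow, map_neg, map_one]
  rw [this]
  ring

lemma coeff_GG (a : K) (n : ℕ) :
    (GG p a).coeff n = if n < p then bb' p a n else 0 := by
  rw [GG, finset_sum_coeff]
  simp only [coeff_C_mul, coeff_X_pow, mul_ite, mul_one, mul_zero]
  rw [Finset.sum_ite_eq (Finset.range p) n (fun k => bb' p a k)]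
  simp [Finset.mem_range]

lemma natDegree_GG_le (a : K) : (GG p a).natDegree ≤ p - 1 := by
  apply Polynomial.natDegree_le_iff_coeff_eq_zero.mpr
  intro n hn
  rw [coeff_GG, if_neg]
  have := ppos (p := p)
  omega

end bbsec
section odesec

open Polynomial Finset

variable {p : ℕ} [hp : Fact p.Prime] {K : Type*} [Field K] [CharP K p]

lemma odeF (hodd : Odd p) (a : K) :
    derivative (Lag p a) * X + C a * Lag p a - Lag p a * X
      = X ^ p - C (a ^ p - a) := by
  have hpp := ppos (p := p)
  ext n
  rw [coeff_sub, coeff_add, coeff_C_mul, coeff_sub, coeff_X_pow, coeff_C]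
  rcases n with _ | n
  · rw [coeff_mul_X_zero, coeff_mul_X_zero, coeff_Lag, if_pos hpp, bb_zero hodd,
      if_neg (by omega), if_pos rfl]
    have hpow : a ^ (p - 1) * a = a ^ p := by
      rw [← pow_succ]; congr 1; omega
    linear_combination -hpow
  · rw [coeff_mul_X, coeff_mul_X, coeff_derivative, coeff_Lag, coeff_Lag,
      if_neg (Nat.succ_ne_zero n)]
    by_cases h1 : n + 1 < p
    · rw [if_pos h1, if_pos (by omega), if_neg (by omega)]
      have hrec := bb_rec (p := p) a n (by omega)
      push_cast at hrec
      linear_combination -hrec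
    · by_cases h2 : n + 1 = p
      · rw [if_neg (by omega), if_pos (by omega), if_pos h2,
          show n = p - 1 from by omega, bb_last hodd]
        ring
      · rw [if_neg (by omega), if_neg (by omega), if_neg (by omega)]
        ring

lemma odeG (hodd : Odd p) (a : K) :
    derivative (GG p a) * X + GG p a * X - C a * GG p a
      = -(X ^ p) + C (a ^ p - a) := by
  have hpp := ppos (p := p)
  ext n
  rw [coeff_sub, coeff_add, coeff_C_mul, coeff_add, coeff_neg, coeff_X_pow, coeff_C]
  rcases n with _ | n
  · rw [coeff_mul_X_zero, coeff_mul_X_zero, coeff_GG, if_pos hpp, bb'_zero hodd,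
      if_neg (by omega), if_pos rfl]
    have hpow : a ^ (p - 1) * a = a ^ p := by
      rw [← pow_succ]; congr 1; omega
    linear_combination hpow
  · rw [coeff_mul_X, coeff_mul_X, coeff_derivative, coeff_GG, coeff_GG,
      if_neg (Nat.succ_ne_zero n)]
    by_cases h1 : n + 1 < p
    · rw [if_pos h1, if_pos (by omega), if_neg (by omega)]
      have hrec := bb'_rec (p := p) a n (by omega)
      push_cast at hrec
      linear_combination hrec
    · by_cases h2 : n + 1 = p
      · rw [if_neg (by omega), if_pos (by omega), if_pos h2,
          show n = p - 1 from by omega, bb'_last hodd]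
        ring
      · rw [if_neg (by omega), if_neg (by omega), if_neg (by omega)]
        ring

lemma key_deriv (hodd : Odd p) (a : K) :
    derivative (Lag p a * GG p a) * X
      = (X ^ p - C (a ^ p - a)) * (GG p a - Lag p a) := by
  have h1 := odeF hodd a
  have h2 := odeG hodd a
  rw [derivative_mul]
  linear_combination (GG p a) * h1 + (Lag p a) * h2

end odesec
section sumsec

open Polynomial Finset

variable {p : ℕ} [hp : Fact p.Prime] {K : Type*} [Field K] [CharP K p]

lemma refl_prod (a : K) (k : ℕ) (hk1 : 1 ≤ k) (hk2 : k < p) :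
    ∏ i ∈ Ico (p - k + 1) p, (a - (i : K)) = ∏ j ∈ Ico 1 k, (a + (j : K)) := by
  refine (Finset.prod_nbij' (fun j => p - j) (fun i => p - i) ?_ ?_ ?_ ?_ ?_).symm
  · intro j hj; rw [mem_Ico] at hj ⊢; omega
  · intro i hi; rw [mem_Ico] at hi ⊢; omega
  · intro j hj; rw [mem_Ico] at hj; omega
  · intro i hi; rw [mem_Ico] at hi; omega
  · intro j hj
    rw [mem_Ico] at hj
    show a + (j : K) = a - ((p - j : ℕ) : K)
    rw [Nat.cast_sub (by omega), CharP.cast_eq_zero K p]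
    ring

lemma term_prod (hodd : Odd p) (a : K) (k : ℕ) (hk1 : 1 ≤ k) (hk2 : k < p) :
    bb p a k * bb' p a (p - k) = ∏ i ∈ (Ico 1 p).erase k, (a + (i : K)) := by
  have h1 : bb p a k = -∏ i ∈ Ico (k + 1) p, (a + (i : K)) :=
    bb_prod hodd a (p - 1 - k) k (by omega)
  have h2 : bb' p a (p - k) = -∏ i ∈ Ico (p - k + 1) p, (a - (i : K)) :=
    bb'_prod hodd a (k - 1) (p - k) (by omega)
  have hset : (Ico 1 p).erase k = Ico 1 k ∪ Ico (k + 1) p := by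
    ext x
    simp only [mem_erase, mem_Ico, mem_union]
    omega
  have hdisj : Disjoint (Ico 1 k) (Ico (k + 1) p) := by
    rw [Finset.disjoint_left]
    intro x hx hx'
    rw [mem_Ico] at hx hx'
    omega
  rw [h1, h2, refl_prod a k hk1 hk2, hset, Finset.prod_union hdisj]
  ring

lemma coeff_p_FG (hodd : Odd p) (a : K) :
    (Lag p a * GG p a).coeff p = -a ^ (p - 2) := by
  have hpp := ppos (p := p)
  rw [coeff_mul,
    Finset.Nat.sum_antidiagonal_eq_sum_range_succ
      (fun i j => (Lag p a).coeff i * (GG p a).coeff j) p]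
  rw [Finset.sum_range_succ, Nat.sub_self, coeff_Lag, if_neg (by omega), zero_mul, add_zero]
  rw [Finset.range_eq_Ico, Finset.sum_eq_sum_Ico_succ_bot hpp, Nat.sub_zero, coeff_GG,
    if_neg (by omega), mul_zero, zero_add]
  rw [← dsum_Ico (p := p) a]
  apply Finset.sum_congr rfl
  intro k hk
  rw [mem_Ico] at hk
  rw [coeff_Lag, if_pos hk.2, coeff_GG, if_pos (by omega)]
  exact term_prod hodd a k hk.1 hk.2

end sumsec
section coresec

open Polynomial Finset

variable {p : ℕ} [hp : Fact p.Prime] {K : Type*} [Field K] [CharP K p]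

lemma core (hodd : Odd p) (a : K) :
    (X ^ p - C (a ^ p - a)) ∣
      (Lag p a * (Lag p (-a)).comp (-X) - C (1 - a ^ (p - 1))) := by
  have hpp := ppos (p := p)
  have hp2 := hp.out.two_le
  rw [GG_eq]
  set F := Lag p a with hF
  set G := GG p a with hG
  set g : K[X] := X ^ p - C (a ^ p - a) with hg
  have hmonic : g.Monic := monic_X_pow_sub_C _ (by omega)
  set Q := (F * G) /ₘ g with hQ
  set R := (F * G) %ₘ g with hR
  have hdiv : R + g * Q = F * G := modByMonic_add_div _ g
  have hdegg : g.degree = (p : ℕ) := degree_X_pow_sub_C hpp _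
  have hdegR : R.degree < (p : ℕ) := by
    have := degree_modByMonic_lt (F * G) hmonic
    rwa [hdegg] at this
  have hgderiv : derivative g = 0 := by
    rw [hg, derivative_sub, derivative_C, derivative_X_pow, sub_zero,
      CharP.cast_eq_zero K p, map_zero, zero_mul]
  have hXH := key_deriv hodd a
  rw [← hF, ← hG, ← hg] at hXH
  have hHd : derivative (F * G) = g * derivative Q + derivative R := by
    calc derivative (F * G) = derivative (R + g * Q) := by rw [hdiv]
      _ = derivative R + (derivative g * Q + g * derivative Q) := by
          rw [derivative_add, derivative_mul]
      _ = g * derivative Q + derivative R := by rw [hgderiv]; ring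
  have heq : g * ((G - F) - derivative Q * X) = derivative R * X := by
    linear_combination -hXH + X * hHd
  have hRX : derivative R * X = 0 := by
    apply Polynomial.eq_zero_of_dvd_of_degree_lt ⟨_, heq.symm⟩
    rw [hdegg]
    by_cases hR0 : derivative R = 0
    · rw [hR0, zero_mul, degree_zero]
      exact WithBot.bot_lt_coe p
    · have h1 : R ≠ 0 := fun h => hR0 (by rw [h, derivative_zero])
      have h2 : (derivative R).degree < R.degree := degree_derivative_lt h1
      rw [degree_mul, degree_X]
      calc (derivative R).degree + 1 ≤ R.degree :=
            Nat.WithBot.add_one_le_of_lt h2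
        _ < (p : ℕ) := hdegR
  have hR' : derivative R = 0 := by
    rcases mul_eq_zero.mp hRX with h | h
    · exact h
    · exact absurd h X_ne_zero
  have hRC : R = C (R.coeff 0) := by
    ext n
    rcases n with _ | n
    · simp
    · rw [coeff_C, if_neg (Nat.succ_ne_zero n)]
      by_cases hn : n + 1 < p
      · have hd : (derivative R).coeff n = R.coeff (n + 1) * ((n : K) + 1) :=
          coeff_derivative R n
        rw [hR', coeff_zero] at hd
        rcases mul_eq_zero.mp hd.symm with h | h
        · exact h
        · exfalso
          have := cast_succ_ne_zero (p := p) (K := K) (k := n) hn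
          push_cast at this
          exact this h
      · apply coeff_eq_zero_of_degree_lt
        apply lt_of_lt_of_le hdegR
        exact_mod_cast (by omega : p ≤ n + 1)
  -- coefficient of X^p
  have hQp : Q.coeff p = 0 := by
    apply coeff_eq_zero_of_natDegree_lt
    have h1 : (F * G).natDegree ≤ 2 * p - 2 := by
      refine le_trans natDegree_mul_le ?_
      have h4 : F.natDegree ≤ p - 1 := by rw [hF]; exact natDegree_Lag_le a
      have h5 : G.natDegree ≤ p - 1 := by rw [hG]; exact natDegree_GG_le a
      omega
    have h2 : Q.natDegree = (F * G).natDegree - p := by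
      rw [hQ, natDegree_divByMonic _ hmonic, hg, natDegree_X_pow_sub_C]
    omega
  have hcp := congrArg (fun q : K[X] => q.coeff p) hdiv
  rw [coeff_add, hRC, coeff_C, if_neg (by omega)] at hcp
  have hgQ : (g * Q).coeff p = Q.coeff 0 - (a ^ p - a) * Q.coeff p := by
    rw [hg, sub_mul, coeff_sub, coeff_C_mul]
    congr 1
    rw [mul_comm, coeff_mul_X_pow', if_pos (le_refl p), Nat.sub_self]
  rw [hgQ, hQp, mul_zero, sub_zero, zero_add] at hcp
  -- hcp : Q.coeff 0 = (F * G).coeff p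
  have hcp2 : Q.coeff 0 = -a ^ (p - 2) := by rw [hcp, coeff_p_FG hodd a]
  -- coefficient of X^0
  have hc0 := congrArg (fun q : K[X] => q.coeff 0) hdiv
  rw [coeff_add, mul_coeff_zero, mul_coeff_zero, hg, coeff_sub, coeff_X_pow,
    if_neg (by omega), coeff_C, if_pos rfl, coeff_Lag (p := p), if_pos hpp,
    coeff_GG (p := p), if_pos hpp, bb_zero hodd, bb'_zero hodd, hcp2] at hc0
  -- hc0 : R.coeff 0 + (0 - (a^p - a)) * (-a^(p-2)) = (1 - a^(p-1)) * (1 - a^(p-1))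
  have hr0 : R.coeff 0 = 1 - a ^ (p - 1) := by
    obtain ⟨q, hq⟩ : ∃ q, p = q + 2 := ⟨p - 2, by omega⟩
    rw [show p - 1 = q + 1 from by omega] at hc0 ⊢
    rw [show p - 2 = q from by omega, hq] at hc0
    linear_combination hc0
  refine ⟨Q, ?_⟩
  rw [← hdiv, hRC, hr0]
  ring

end coresec

theorem stmt8 (p r : ℕ) [Fact p.Prime] (hodd : Odd p) (hr0 : 0 < r) (hrp : r < p) :
    (Polynomial.X ^ p -
        Polynomial.C ((RatFunc.X : RatFunc (ZMod p)) ^ p - RatFunc.X)) ∣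
      ((Lag p ((r : RatFunc (ZMod p)) * RatFunc.X)).comp
            (Polynomial.C (r : RatFunc (ZMod p)) * Polynomial.X) *
          (Lag p (-((r : RatFunc (ZMod p)) * RatFunc.X))).comp
            (Polynomial.C (-(r : RatFunc (ZMod p))) * Polynomial.X) -
        Polynomial.C (1 - (RatFunc.X : RatFunc (ZMod p)) ^ (p - 1))) := by
  classical
  set K := RatFunc (ZMod p) with hK
  haveI : CharP K p := charP_of_injective_algebraMap (algebraMap (ZMod p) K).injective p
  set α : K := RatFunc.X with hα
  set a : K := (r : K) * α with ha
  have hrZ : ((r : ℕ) : ZMod p) ≠ 0 := by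
    rw [Ne, ZMod.natCast_eq_zero_iff]
    intro hdvd
    have := Nat.le_of_dvd hr0 hdvd
    omega
  have hmap : ((r : ℕ) : K) = algebraMap (ZMod p) K ((r : ℕ) : ZMod p) :=
    (map_natCast (algebraMap (ZMod p) K) r).symm
  have hrp1 : ((r : ℕ) : K) ^ p = ((r : ℕ) : K) := by
    rw [hmap, ← map_pow, ZMod.pow_card]
  have hr1 : ((r : ℕ) : K) ^ (p - 1) = 1 := by
    rw [hmap, ← map_pow, ZMod.pow_card_sub_one_eq_one hrZ, map_one]
  have hfa : a ^ p - a = (r : K) * (α ^ p - α) := by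
    rw [ha]
    linear_combination (α : K) ^ p * hrp1
  have hfb : a ^ (p - 1) = α ^ (p - 1) := by
    rw [ha]
    linear_combination (α : K) ^ (p - 1) * hr1
  obtain ⟨u, hu⟩ := core hodd a
  have hcomp := congrArg (fun f : K[X] => f.comp (Polynomial.C (r : K) * Polynomial.X)) hu
  simp only [sub_comp, mul_comp, C_comp, pow_comp, X_comp, neg_comp, comp_assoc] at hcomp
  have hfc : (Polynomial.C (r : K) * Polynomial.X) ^ p
      = Polynomial.C (r : K) * Polynomial.X ^ p := by
    rw [mul_pow, ← map_pow, hrp1]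
  have hfa' : (Polynomial.C (a ^ p - a) : K[X])
      = Polynomial.C (r : K) * Polynomial.C (α ^ p - α) := by
    rw [hfa, map_mul]
  have hfb' : ((1 : K) - a ^ (p - 1)) = 1 - α ^ (p - 1) := by rw [hfb]
  rw [hfc, hfa', hfb'] at hcomp
  have hneg : (Polynomial.C (-(r : K)) : K[X]) * Polynomial.X
      = -(Polynomial.C (r : K) * Polynomial.X) := by
    rw [map_neg, neg_mul]
  rw [hneg]
  refine ⟨Polynomial.C (r : K) * u.comp (Polynomial.C (r : K) * Polynomial.X), ?_⟩
  linear_combination hcomp
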